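/- Let T̂ ⊂ ℝ³ be the reference tetrahedron with vertices (0,0,0),(1,0,0),(0,1,0),(0,0,1), and let f ∈ L²(e₁) where e₁ is the face opposite (1,0,0). Define û(x) = (f(x2,x3),0,0). If q ∈ P_k(e₁) satisfies ∫_{e₁} f z = ∫_{e₁} q z for all z ∈ P_k(e₁), then the field p̂(x) = (q(x2,x3),0,0) satisfies all BDM_k interpolation conditions for û: its normal moments against P_k on each of the four faces agree with those of û, and ∫_{T̂} p̂·z = ∫_{T̂} û·z for all z ∈ N_{k-1}(T̂). Hence the BDM_k interpolant of û is (q(x2,x3),0,0). -/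

import Mathlib

open MeasureTheory intervalIntegral MvPolynomial

/-- Dot product on `ℝ × ℝ × ℝ` (viewed as `ℝ³`). -/
def dot3 (a b : ℝ × ℝ × ℝ) : ℝ := a.1 * b.1 + a.2.1 * b.2.1 + a.2.2 * b.2.2

/-- Flux moment `∫_e (F·n) z dS` over the triangular face with vertices `a,b,c`, where
`N = ±(b-a)×(c-a)` is the area-weighted outward normal; the surface element cancels the
normalization of the normal under the parameterization `γ(s,t) = a + s(b-a) + t(c-a)`. -/
noncomputable def faceFluxMoment (F : ℝ × ℝ × ℝ → ℝ × ℝ × ℝ) (a b c N : ℝ × ℝ × ℝ)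
    (z : ℝ × ℝ × ℝ → ℝ) : ℝ :=
  ∫ s in (0:ℝ)..1, ∫ t in (0:ℝ)..(1 - s),
    dot3 (F (a + s • (b - a) + t • (c - a))) N * z (a + s • (b - a) + t • (c - a))

/-- The reference tetrahedron `T̂ = conv{(0,0,0),(1,0,0),(0,1,0),(0,0,1)}`. -/
def refTet : Set (ℝ × ℝ × ℝ) := {p | 0 ≤ p.1 ∧ 0 ≤ p.2.1 ∧ 0 ≤ p.2.2 ∧ p.1 + p.2.1 + p.2.2 ≤ 1}

/-- The face `e₁` of `T̂` (in the plane `x₁ = 0`) in its coordinates `(x₂,x₃)`. -/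
def refFace : Set (ℝ × ℝ) := {pr | 0 ≤ pr.1 ∧ 0 ≤ pr.2 ∧ pr.1 + pr.2 ≤ 1}

/-- Evaluation of a polynomial in three variables at a point of `ℝ × ℝ × ℝ`. -/
noncomputable def ev3 (z : MvPolynomial (Fin 3) ℝ) (p : ℝ × ℝ × ℝ) : ℝ :=
  MvPolynomial.eval ![p.1, p.2.1, p.2.2] z

namespace BDMAux

lemma measurableSet_refFace : MeasurableSet refFace := by
  have h : refFace = {pr : ℝ × ℝ | 0 ≤ pr.1} ∩ {pr | 0 ≤ pr.2} ∩ {pr | pr.1 + pr.2 ≤ 1} := by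
    ext pr; simp [refFace]; tauto
  rw [h]
  exact ((measurableSet_le measurable_const measurable_fst).inter
    (measurableSet_le measurable_const measurable_snd)).inter
    (measurableSet_le (measurable_fst.add measurable_snd) measurable_const)

lemma isCompact_refFace : IsCompact refFace := by
  have h : refFace = {pr : ℝ × ℝ | 0 ≤ pr.1} ∩ {pr | 0 ≤ pr.2} ∩ {pr | pr.1 + pr.2 ≤ 1} := by
    ext pr; simp [refFace]; tauto
  have hcl : IsClosed refFace := by
    rw [h]
    exact ((isClosed_le continuous_const continuous_fst).inter
      (isClosed_le continuous_const continuous_snd)).inter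
      (isClosed_le (continuous_fst.add continuous_snd) continuous_const)
  have hsub : refFace ⊆ Set.Icc (0:ℝ) 1 ×ˢ Set.Icc (0:ℝ) 1 := by
    rintro ⟨x, y⟩ ⟨h1, h2, h3⟩
    exact ⟨⟨h1, by linarith⟩, ⟨h2, by linarith⟩⟩
  exact (isCompact_Icc.prod isCompact_Icc).of_isClosed_subset hcl hsub

lemma measurableSet_refTet : MeasurableSet refTet := by
  have h : refTet = {p : ℝ × ℝ × ℝ | 0 ≤ p.1} ∩ {p | 0 ≤ p.2.1} ∩ {p | 0 ≤ p.2.2}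
      ∩ {p | p.1 + p.2.1 + p.2.2 ≤ 1} := by
    ext p; simp [refTet]; tauto
  rw [h]
  have m1 : Measurable fun p : ℝ × ℝ × ℝ => p.1 := measurable_fst
  have m2 : Measurable fun p : ℝ × ℝ × ℝ => p.2.1 := measurable_fst.comp measurable_snd
  have m3 : Measurable fun p : ℝ × ℝ × ℝ => p.2.2 := measurable_snd.comp measurable_snd
  exact (((measurableSet_le measurable_const m1).inter
    (measurableSet_le measurable_const m2)).inter
    (measurableSet_le measurable_const m3)).inter
    (measurableSet_le ((m1.add m2).add m3) measurable_const)

lemma cont2 (z : MvPolynomial (Fin 2) ℝ) :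
    Continuous fun pr : ℝ × ℝ => MvPolynomial.eval ![pr.1, pr.2] z := by
  have h : Continuous fun pr : ℝ × ℝ => (![pr.1, pr.2] : Fin 2 → ℝ) := by
    apply continuous_pi; intro i
    fin_cases i
    · simpa using continuous_fst
    · simpa using continuous_snd
  exact (MvPolynomial.continuous_eval z).comp h

lemma cont3 (w : MvPolynomial (Fin 3) ℝ) : Continuous (ev3 w) := by
  have h : Continuous fun p : ℝ × ℝ × ℝ => (![p.1, p.2.1, p.2.2] : Fin 3 → ℝ) := by
    apply continuous_pi; intro i
    fin_cases i
    · simpa using continuous_fst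
    · simpa using (by fun_prop : Continuous fun p : ℝ × ℝ × ℝ => p.2.1)
    · simpa using (by fun_prop : Continuous fun p : ℝ × ℝ × ℝ => p.2.2)
  exact (MvPolynomial.continuous_eval w).comp h

lemma integOn_mul_cont {g : ℝ × ℝ → ℝ} (hg : IntegrableOn g refFace volume)
    {h : ℝ × ℝ → ℝ} (hh : Continuous h) :
    IntegrableOn (fun pr => g pr * h pr) refFace volume := by
  obtain ⟨C, hC⟩ := isCompact_refFace.exists_bound_of_continuousOn hh.continuousOn
  have hb : ∀ᵐ pr ∂(volume.restrict refFace), ‖h pr‖ ≤ C := by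
    rw [ae_restrict_iff' measurableSet_refFace]
    exact Filter.Eventually.of_forall hC
  have := hg.bdd_mul (hh.aestronglyMeasurable.restrict) hb
  exact this.congr (Filter.Eventually.of_forall fun x => mul_comm _ _)

end BDMAux

namespace BDMAux

lemma tri (G : ℝ × ℝ → ℝ) (hG : IntegrableOn G refFace volume) :
    (∫ s in (0:ℝ)..1, ∫ t in (0:ℝ)..(1 - s), G (s, t)) = ∫ pr in refFace, G pr := by
  have hind : Integrable (refFace.indicator G) volume :=
    (integrable_indicator_iff measurableSet_refFace).2 hG
  have h2 : (∫ pr, refFace.indicator G pr) = ∫ s, ∫ t, refFace.indicator G (s, t) := by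
    rw [Measure.volume_eq_prod]
    rw [Measure.volume_eq_prod ℝ ℝ] at hind
    exact integral_prod _ hind
  have key : ∀ s : ℝ, (∫ t, refFace.indicator G (s, t)) =
      (Set.Icc (0:ℝ) 1).indicator (fun s => ∫ t in (0:ℝ)..(1 - s), G (s, t)) s := by
    intro s
    by_cases hs : s ∈ Set.Icc (0:ℝ) 1
    · have hsec : (fun t => refFace.indicator G (s, t)) =
          (Set.Icc (0:ℝ) (1 - s)).indicator (fun t => G (s, t)) := by
        funext t
        by_cases ht : t ∈ Set.Icc (0:ℝ) (1 - s)
        · rw [Set.indicator_of_mem ht]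
          exact (Set.indicator_of_mem (show (s, t) ∈ refFace from
            ⟨hs.1, ht.1, by have := ht.2; simp only []; linarith⟩) G)
        · rw [Set.indicator_of_notMem ht]
          refine (Set.indicator_of_notMem ?_ G)
          intro hmem
          exact ht ⟨hmem.2.1, by have := hmem.2.2; linarith⟩
      rw [hsec, MeasureTheory.integral_indicator measurableSet_Icc, Set.indicator_of_mem hs,
        integral_Icc_eq_integral_Ioc,
        ← intervalIntegral.integral_of_le (by linarith [hs.2] : (0:ℝ) ≤ 1 - s)]
    · rw [Set.indicator_of_notMem hs]
      have hz : ∀ t, refFace.indicator G (s, t) = 0 := by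
        intro t
        apply Set.indicator_of_notMem
        intro hmem
        exact hs ⟨hmem.1, by have := hmem.2.1; have := hmem.2.2; linarith⟩
      simp only [hz, MeasureTheory.integral_zero]
  calc (∫ s in (0:ℝ)..1, ∫ t in (0:ℝ)..(1 - s), G (s, t))
      = ∫ s in Set.Icc (0:ℝ) 1, ∫ t in (0:ℝ)..(1 - s), G (s, t) := by
        rw [integral_Icc_eq_integral_Ioc, ← intervalIntegral.integral_of_le zero_le_one]
    _ = ∫ s, (Set.Icc (0:ℝ) 1).indicator (fun s => ∫ t in (0:ℝ)..(1 - s), G (s, t)) s := by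
        rw [MeasureTheory.integral_indicator measurableSet_Icc]
    _ = ∫ s, ∫ t, refFace.indicator G (s, t) := by
        refine integral_congr_ae (Filter.Eventually.of_forall fun s => ?_)
        rw [← key s]
    _ = ∫ pr, refFace.indicator G pr := h2.symm
    _ = ∫ pr in refFace, G pr := MeasureTheory.integral_indicator measurableSet_refFace

end BDMAux

namespace BDMAux

/-- Evaluation at `![x,y,z]` as an explicit monomial sum. -/
lemma eval3_eq (w : MvPolynomial (Fin 3) ℝ) (x y z : ℝ) :
    MvPolynomial.eval ![x, y, z] w =
      ∑ d ∈ w.support, w.coeff d * (x ^ d 0 * (y ^ d 1 * z ^ d 2)) := by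
  rw [eval_eq']
  refine Finset.sum_congr rfl fun d _ => ?_
  rw [Fin.prod_univ_three]
  simp [mul_assoc]

lemma support_sum_le3 {w : MvPolynomial (Fin 3) ℝ} {d : Fin 3 →₀ ℕ} (hd : d ∈ w.support) :
    d 0 + d 1 + d 2 ≤ w.totalDegree := by
  have h := MvPolynomial.le_totalDegree hd
  rwa [Finsupp.sum_fintype _ _ (fun _ => rfl), Fin.sum_univ_three] at h

/-- `1 - X 0 - X 1` has total degree at most `1`. -/
lemma deg_lin : (1 - X 0 - X 1 : MvPolynomial (Fin 2) ℝ).totalDegree ≤ 1 := by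
  refine (totalDegree_sub _ _).trans (max_le ((totalDegree_sub _ _).trans (max_le ?_ ?_)) ?_)
  · simp [totalDegree_one]
  · simp [totalDegree_X]
  · simp [totalDegree_X]

lemma degXpow (i : Fin 2) (n : ℕ) : ((X i : MvPolynomial (Fin 2) ℝ) ^ n).totalDegree ≤ n :=
  (totalDegree_pow _ _).trans (by simp [totalDegree_X])

lemma degLpow (n : ℕ) :
    (((1 - X 0 - X 1) : MvPolynomial (Fin 2) ℝ) ^ n).totalDegree ≤ n :=
  (totalDegree_pow _ _).trans (by simpa using Nat.mul_le_mul_left n deg_lin)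

/-- substitution `x₁ := 0` -/
noncomputable def Zf1 (z : MvPolynomial (Fin 3) ℝ) : MvPolynomial (Fin 2) ℝ :=
  ∑ d ∈ z.support, C (z.coeff d * (0:ℝ) ^ d 0) * (X 0 ^ d 1 * X 1 ^ d 2)

lemma Zf1_eval (z : MvPolynomial (Fin 3) ℝ) (s t : ℝ) :
    MvPolynomial.eval ![(0:ℝ), s, t] z = MvPolynomial.eval ![s, t] (Zf1 z) := by
  rw [eval3_eq, Zf1, map_sum]
  refine Finset.sum_congr rfl fun d _ => ?_
  simp only [map_mul, map_pow, map_sub, map_one, eval_C, eval_X,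
    Matrix.cons_val_zero, Matrix.cons_val_one, Matrix.head_cons]
  ring

lemma Zf1_deg (z : MvPolynomial (Fin 3) ℝ) : (Zf1 z).totalDegree ≤ z.totalDegree := by
  refine (totalDegree_finset_sum _ _).trans (Finset.sup_le fun d hd => ?_)
  refine le_trans (totalDegree_mul _ _) ?_
  have hc : (C (z.coeff d * (0:ℝ) ^ d 0) : MvPolynomial (Fin 2) ℝ).totalDegree = 0 :=
    totalDegree_C _
  have hm := le_trans (totalDegree_mul ((X 0 : MvPolynomial (Fin 2) ℝ) ^ d 1)
    ((X 1 : MvPolynomial (Fin 2) ℝ) ^ d 2)) (add_le_add (degXpow 0 (d 1)) (degXpow 1 (d 2)))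
  have hs := support_sum_le3 hd
  omega

/-- substitution `x₁ := 1 - x₂ - x₃` -/
noncomputable def Zf4 (z : MvPolynomial (Fin 3) ℝ) : MvPolynomial (Fin 2) ℝ :=
  ∑ d ∈ z.support, C (z.coeff d) * ((1 - X 0 - X 1) ^ d 0 * (X 0 ^ d 1 * X 1 ^ d 2))

lemma Zf4_eval (z : MvPolynomial (Fin 3) ℝ) (s t : ℝ) :
    MvPolynomial.eval ![1 - s - t, s, t] z = MvPolynomial.eval ![s, t] (Zf4 z) := by
  rw [eval3_eq, Zf4, map_sum]
  refine Finset.sum_congr rfl fun d _ => ?_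
  simp only [map_mul, map_pow, map_sub, map_one, eval_C, eval_X,
    Matrix.cons_val_zero, Matrix.cons_val_one, Matrix.head_cons]
  try ring

lemma Zf4_deg (z : MvPolynomial (Fin 3) ℝ) : (Zf4 z).totalDegree ≤ z.totalDegree := by
  refine (totalDegree_finset_sum _ _).trans (Finset.sup_le fun d hd => ?_)
  refine le_trans (totalDegree_mul _ _) ?_
  have hc : (C (z.coeff d) : MvPolynomial (Fin 2) ℝ).totalDegree = 0 := totalDegree_C _
  have hm := le_trans (totalDegree_mul
    (((1 - X 0 - X 1) : MvPolynomial (Fin 2) ℝ) ^ d 0)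
    ((X 0 : MvPolynomial (Fin 2) ℝ) ^ d 1 * (X 1 : MvPolynomial (Fin 2) ℝ) ^ d 2))
    (add_le_add (degLpow (d 0)) (le_trans (totalDegree_mul _ _)
      (add_le_add (degXpow 0 (d 1)) (degXpow 1 (d 2)))))
  have hs := support_sum_le3 hd
  omega

/-- `x₁`-antiderivative of `w`, evaluated at `x₁ = 1 - x₂ - x₃`, as a 2-variable polynomial. -/
noncomputable def Wpoly (w : MvPolynomial (Fin 3) ℝ) : MvPolynomial (Fin 2) ℝ :=
  ∑ d ∈ w.support, C (w.coeff d / ((d 0 : ℝ) + 1)) *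
    ((1 - X 0 - X 1) ^ (d 0 + 1) * (X 0 ^ d 1 * X 1 ^ d 2))

lemma Wpoly_deg (w : MvPolynomial (Fin 3) ℝ) :
    (Wpoly w).totalDegree ≤ w.totalDegree + 1 := by
  refine (totalDegree_finset_sum _ _).trans (Finset.sup_le fun d hd => ?_)
  refine le_trans (totalDegree_mul _ _) ?_
  have hc : (C (w.coeff d / ((d 0 : ℝ) + 1)) : MvPolynomial (Fin 2) ℝ).totalDegree = 0 :=
    totalDegree_C _
  have hm := le_trans (totalDegree_mul
    (((1 - X 0 - X 1) : MvPolynomial (Fin 2) ℝ) ^ (d 0 + 1))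
    ((X 0 : MvPolynomial (Fin 2) ℝ) ^ d 1 * (X 1 : MvPolynomial (Fin 2) ℝ) ^ d 2))
    (add_le_add (degLpow (d 0 + 1)) (le_trans (totalDegree_mul _ _)
      (add_le_add (degXpow 0 (d 1)) (degXpow 1 (d 2)))))
  have hs := support_sum_le3 hd
  omega

lemma Wpoly_eval (w : MvPolynomial (Fin 3) ℝ) (y z : ℝ) :
    (∫ x in (0:ℝ)..(1 - y - z), MvPolynomial.eval ![x, y, z] w) =
      MvPolynomial.eval ![y, z] (Wpoly w) := by
  simp_rw [eval3_eq]
  rw [intervalIntegral.integral_finset_sum (fun d _ => by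
    apply Continuous.intervalIntegrable; fun_prop)]
  rw [Wpoly, map_sum]
  refine Finset.sum_congr rfl fun d _ => ?_
  have hrw : (fun x : ℝ => w.coeff d * (x ^ d 0 * (y ^ d 1 * z ^ d 2)))
      = fun x => (w.coeff d * (y ^ d 1 * z ^ d 2)) * x ^ d 0 := by
    funext x; ring
  rw [hrw, intervalIntegral.integral_const_mul, integral_pow]
  have h0 : ((d 0 : ℝ) + 1) ≠ 0 := by positivity
  simp only [map_mul, map_pow, map_sub, map_one, eval_C, eval_X,
    Matrix.cons_val_zero, Matrix.cons_val_one, Matrix.head_cons]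
  rw [zero_pow (Nat.succ_ne_zero _)]
  field_simp
  ring

end BDMAux

namespace BDMAux

lemma refTet_subset : refTet ⊆ Set.Icc (0:ℝ) 1 ×ˢ refFace := by
  rintro ⟨x, pr⟩ ⟨h1, h2, h3, h4⟩
  exact ⟨⟨h1, by simp at h4 ⊢; linarith⟩, ⟨h2, h3, by simp at h4 ⊢; linarith⟩⟩

lemma tet_integrable {g : ℝ × ℝ → ℝ} (hg : IntegrableOn g refFace volume)
    (w : MvPolynomial (Fin 3) ℝ) :
    IntegrableOn (fun p : ℝ × ℝ × ℝ => g p.2 * ev3 w p) refTet volume := by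
  have hKm : MeasurableSet (Set.Icc (0:ℝ) 1 ×ˢ refFace) :=
    measurableSet_Icc.prod measurableSet_refFace
  have hK : IsCompact (Set.Icc (0:ℝ) 1 ×ˢ refFace) := isCompact_Icc.prod isCompact_refFace
  obtain ⟨C, hC⟩ := hK.exists_bound_of_continuousOn (cont3 w).continuousOn
  refine IntegrableOn.mono_set ?_ refTet_subset
  haveI : IsFiniteMeasure (volume.restrict (Set.Icc (0:ℝ) 1)) :=
    ⟨by rw [Measure.restrict_apply_univ]; exact isCompact_Icc.measure_lt_top⟩
  have h1 : Integrable (fun p : ℝ × (ℝ × ℝ) => (1:ℝ) * g p.2)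
      ((volume.restrict (Set.Icc (0:ℝ) 1)).prod (volume.restrict refFace)) :=
    (integrable_const (1:ℝ)).mul_prod hg
  have h1' : Integrable (fun p : ℝ × (ℝ × ℝ) => g p.2)
      ((volume.restrict (Set.Icc (0:ℝ) 1)).prod (volume.restrict refFace)) := by
    simpa using h1
  have hb : ∀ᵐ p ∂((volume.restrict (Set.Icc (0:ℝ) 1)).prod (volume.restrict refFace)),
      ‖ev3 w p‖ ≤ C := by
    rw [Measure.prod_restrict, ae_restrict_iff' hKm]
    exact Filter.Eventually.of_forall hC
  have h2 := h1'.bdd_mul (c := C)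
    (f := ev3 w) ((cont3 w).aestronglyMeasurable) hb
  have h3 : IntegrableOn (fun p : ℝ × ℝ × ℝ => ev3 w p * g p.2)
      (Set.Icc (0:ℝ) 1 ×ˢ refFace) volume := by
    rw [IntegrableOn, Measure.volume_eq_prod, ← Measure.prod_restrict]
    exact h2
  exact h3.congr_fun (fun p _ => mul_comm _ _) hKm

lemma tet (g : ℝ × ℝ → ℝ) (hg : IntegrableOn g refFace volume)
    (w : MvPolynomial (Fin 3) ℝ) :
    (∫ p in refTet, g p.2 * ev3 w p) =
      ∫ pr in refFace, g pr * MvPolynomial.eval ![pr.1, pr.2] (Wpoly w) := by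
  set H : ℝ × ℝ × ℝ → ℝ := fun p => g p.2 * ev3 w p with hH
  have hind : Integrable (refTet.indicator H) volume :=
    (integrable_indicator_iff measurableSet_refTet).2 (tet_integrable hg w)
  have key : ∀ pr : ℝ × ℝ, (∫ x, refTet.indicator H (x, pr)) =
      refFace.indicator (fun pr => g pr * MvPolynomial.eval ![pr.1, pr.2] (Wpoly w)) pr := by
    intro pr
    by_cases hpr : pr ∈ refFace
    · obtain ⟨hp1, hp2, hp3⟩ := hpr
      have hc : (0:ℝ) ≤ 1 - pr.1 - pr.2 := by linarith
      have hsec : (fun x => refTet.indicator H (x, pr)) =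
          (Set.Icc (0:ℝ) (1 - pr.1 - pr.2)).indicator
            (fun x => g pr * MvPolynomial.eval ![x, pr.1, pr.2] w) := by
        funext x
        by_cases hx : x ∈ Set.Icc (0:ℝ) (1 - pr.1 - pr.2)
        · rw [Set.indicator_of_mem hx]
          have hmem : (x, pr) ∈ refTet := ⟨hx.1, hp1, hp2, by have := hx.2; simp only []; linarith⟩
          rw [Set.indicator_of_mem hmem]
          rfl
        · rw [Set.indicator_of_notMem hx]
          refine Set.indicator_of_notMem ?_ H
          intro hmem
          exact hx ⟨hmem.1, by have := hmem.2.2.2; simp only [] at this; linarith⟩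
      rw [hsec, MeasureTheory.integral_indicator measurableSet_Icc,
        Set.indicator_of_mem (show pr ∈ refFace from ⟨hp1, hp2, hp3⟩)]
      rw [integral_Icc_eq_integral_Ioc, ← intervalIntegral.integral_of_le hc,
        intervalIntegral.integral_const_mul, Wpoly_eval]
    · rw [Set.indicator_of_notMem hpr]
      have hz : ∀ x, refTet.indicator H (x, pr) = 0 := by
        intro x
        apply Set.indicator_of_notMem
        intro hmem
        exact hpr ⟨hmem.2.1, hmem.2.2.1, by have := hmem.1; have := hmem.2.2.2; linarith⟩
      simp only [hz, MeasureTheory.integral_zero]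
  calc (∫ p in refTet, H p) = ∫ p, refTet.indicator H p :=
        (MeasureTheory.integral_indicator measurableSet_refTet).symm
    _ = ∫ pr, ∫ x, refTet.indicator H (x, pr) := by
        rw [Measure.volume_eq_prod ℝ (ℝ × ℝ)] at hind ⊢
        exact integral_prod_symm _ hind
    _ = ∫ pr, refFace.indicator
          (fun pr => g pr * MvPolynomial.eval ![pr.1, pr.2] (Wpoly w)) pr := by
        refine integral_congr_ae (Filter.Eventually.of_forall fun pr => ?_)
        rw [← key pr]
    _ = ∫ pr in refFace, g pr * MvPolynomial.eval ![pr.1, pr.2] (Wpoly w) :=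
        MeasureTheory.integral_indicator measurableSet_refFace

end BDMAux

namespace BDMAux

lemma face_reduce (F : ℝ × ℝ × ℝ → ℝ × ℝ × ℝ) (a b c N : ℝ × ℝ × ℝ)
    (z : ℝ × ℝ × ℝ → ℝ) (G : ℝ × ℝ → ℝ)
    (h : ∀ s t : ℝ, dot3 (F (a + s • (b - a) + t • (c - a))) N
      * z (a + s • (b - a) + t • (c - a)) = G (s, t))
    (hG : IntegrableOn G refFace volume) :
    faceFluxMoment F a b c N z = ∫ pr in refFace, G pr := by
  rw [← tri G hG]
  unfold faceFluxMoment
  simp only [h]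

end BDMAux


open BDMAux in
/-- Lemma 3.2 analogue (`Lemma bdm_zero`): let `f ∈ L²(e₁)`, `û(x) = (f(x₂,x₃),0,0)` and
let `q ∈ P_k(e₁)` satisfy `∫_{e₁} f z = ∫_{e₁} q z` for all `z ∈ P_k(e₁)`.  Then
`p̂(x) = (q(x₂,x₃),0,0)` satisfies *all* BDM_k interpolation conditions for `û` on the
reference tetrahedron `T̂`: the normal flux moments against `P_k` on each of the four faces
(with outward normals proportional to `(-1,0,0)`, `(0,-1,0)`, `(0,0,-1)`, `(1,1,1)/√3`)
agree, and `∫_{T̂} p̂·z = ∫_{T̂} û·z` for all `z ∈ N_{k-1}(T̂) = (P_{k-2})³ ⊕ S_{k-1}`,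
`S_{k-1} = {b ∈ (P_{k-1})³ : b·x ≡ 0}`.  Hence the BDM_k interpolant of `û` is
`(q(x₂,x₃),0,0)`. -/
theorem bdm_zero_refTet (k : ℕ) (hk : 1 ≤ k) (f : ℝ × ℝ → ℝ)
    (hf1 : IntegrableOn f refFace volume)
    (hf2 : IntegrableOn (fun pr => (f pr) ^ 2) refFace volume)
    (q : MvPolynomial (Fin 2) ℝ) (hq : q.totalDegree ≤ k)
    (hmom : ∀ z : MvPolynomial (Fin 2) ℝ, z.totalDegree ≤ k →
      (∫ pr in refFace, f pr * MvPolynomial.eval ![pr.1, pr.2] z) =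
        ∫ pr in refFace, (MvPolynomial.eval ![pr.1, pr.2] q) *
          MvPolynomial.eval ![pr.1, pr.2] z) :
    -- `û` and `p̂`
    ∀ uhat phat : ℝ × ℝ × ℝ → ℝ × ℝ × ℝ,
    uhat = (fun p => (f (p.2.1, p.2.2), 0, 0)) →
    phat = (fun p => (MvPolynomial.eval ![p.2.1, p.2.2] q, 0, 0)) →
    -- face degrees of freedom agree on all four faces
    ((∀ z : MvPolynomial (Fin 3) ℝ, z.totalDegree ≤ k →
        faceFluxMoment phat (0,0,0) (0,1,0) (0,0,1) (-1,0,0) (ev3 z) =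
          faceFluxMoment uhat (0,0,0) (0,1,0) (0,0,1) (-1,0,0) (ev3 z)) ∧
      (∀ z : MvPolynomial (Fin 3) ℝ, z.totalDegree ≤ k →
        faceFluxMoment phat (0,0,0) (1,0,0) (0,0,1) (0,-1,0) (ev3 z) =
          faceFluxMoment uhat (0,0,0) (1,0,0) (0,0,1) (0,-1,0) (ev3 z)) ∧
      (∀ z : MvPolynomial (Fin 3) ℝ, z.totalDegree ≤ k →
        faceFluxMoment phat (0,0,0) (1,0,0) (0,1,0) (0,0,-1) (ev3 z) =
          faceFluxMoment uhat (0,0,0) (1,0,0) (0,1,0) (0,0,-1) (ev3 z)) ∧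
      (∀ z : MvPolynomial (Fin 3) ℝ, z.totalDegree ≤ k →
        faceFluxMoment phat (1,0,0) (0,1,0) (0,0,1) (1,1,1) (ev3 z) =
          faceFluxMoment uhat (1,0,0) (0,1,0) (0,0,1) (1,1,1) (ev3 z))) ∧
    -- interior degrees of freedom against `N_{k-1} = (P_{k-2})³ ⊕ S_{k-1}` agree
    (∀ A B : Fin 3 → MvPolynomial (Fin 3) ℝ,
      (∀ i, (A i).totalDegree + 2 ≤ k ∨ A i = 0) →
      (∀ i, (B i).totalDegree + 1 ≤ k ∨ B i = 0) →
      B 0 * X 0 + B 1 * X 1 + B 2 * X 2 = 0 →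
      (∫ p in refTet, dot3 (phat p)
          (ev3 (A 0 + B 0) p, ev3 (A 1 + B 1) p, ev3 (A 2 + B 2) p)) =
        ∫ p in refTet, dot3 (uhat p)
          (ev3 (A 0 + B 0) p, ev3 (A 1 + B 1) p, ev3 (A 2 + B 2) p)) := by
  intro uhat phat hu hp
  subst hu hp
  have hqInt : IntegrableOn (fun pr : ℝ × ℝ => MvPolynomial.eval ![pr.1, pr.2] q)
      refFace volume := (cont2 q).continuousOn.integrableOn_compact isCompact_refFace
  refine ⟨⟨?_, ?_, ?_, ?_⟩, ?_⟩
  · -- face 1, normal (-1,0,0)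
    intro z hz
    have hpt : ∀ s t : ℝ, ((0,0,0) : ℝ × ℝ × ℝ) + s • (((0,1,0) : ℝ × ℝ × ℝ) - (0,0,0))
        + t • (((0,0,1) : ℝ × ℝ × ℝ) - (0,0,0)) = ((0 : ℝ), s, t) := by
      intro s t
      simp [Prod.ext_iff]
    have h1 := face_reduce (fun p => (MvPolynomial.eval ![p.2.1, p.2.2] q, 0, 0))
      (0,0,0) (0,1,0) (0,0,1) (-1,0,0) (ev3 z)
      (fun pr => -(MvPolynomial.eval ![pr.1, pr.2] q * MvPolynomial.eval ![pr.1, pr.2] (Zf1 z)))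
      (fun s t => by
        rw [hpt s t]; simp [dot3, ev3, Zf1_eval]; try ring)
      ((((cont2 q).mul (cont2 (Zf1 z))).neg).continuousOn.integrableOn_compact isCompact_refFace)
    have h2 := face_reduce (fun p => (f (p.2.1, p.2.2), 0, 0))
      (0,0,0) (0,1,0) (0,0,1) (-1,0,0) (ev3 z)
      (fun pr => -(f pr * MvPolynomial.eval ![pr.1, pr.2] (Zf1 z)))
      (fun s t => by
        rw [hpt s t]; simp [dot3, ev3, Zf1_eval]; try ring)
      ((integOn_mul_cont hf1 (cont2 (Zf1 z))).neg)
    rw [h1, h2, MeasureTheory.integral_neg, MeasureTheory.integral_neg,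
      hmom (Zf1 z) ((Zf1_deg z).trans hz)]
  · -- face 2, normal (0,-1,0): flux vanishes
    intro z _
    simp [faceFluxMoment, dot3]
  · -- face 3, normal (0,0,-1): flux vanishes
    intro z _
    simp [faceFluxMoment, dot3]
  · -- face 4, normal (1,1,1)
    intro z hz
    have hpt : ∀ s t : ℝ, ((1,0,0) : ℝ × ℝ × ℝ) + s • (((0,1,0) : ℝ × ℝ × ℝ) - (1,0,0))
        + t • (((0,0,1) : ℝ × ℝ × ℝ) - (1,0,0)) = ((1 - s - t : ℝ), s, t) := by
      intro s t
      simp [Prod.ext_iff]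
      ring
    have h1 := face_reduce (fun p => (MvPolynomial.eval ![p.2.1, p.2.2] q, 0, 0))
      (1,0,0) (0,1,0) (0,0,1) (1,1,1) (ev3 z)
      (fun pr => MvPolynomial.eval ![pr.1, pr.2] q * MvPolynomial.eval ![pr.1, pr.2] (Zf4 z))
      (fun s t => by
        rw [hpt s t]; simp [dot3, ev3, Zf4_eval])
      (((cont2 q).mul (cont2 (Zf4 z))).continuousOn.integrableOn_compact isCompact_refFace)
    have h2 := face_reduce (fun p => (f (p.2.1, p.2.2), 0, 0))
      (1,0,0) (0,1,0) (0,0,1) (1,1,1) (ev3 z)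
      (fun pr => f pr * MvPolynomial.eval ![pr.1, pr.2] (Zf4 z))
      (fun s t => by
        rw [hpt s t]; simp [dot3, ev3, Zf4_eval])
      (integOn_mul_cont hf1 (cont2 (Zf4 z)))
    rw [h1, h2, hmom (Zf4 z) ((Zf4_deg z).trans hz)]
  · -- interior moments
    intro A B hA hB _
    set w : MvPolynomial (Fin 3) ℝ := A 0 + B 0 with hw
    have hA0 : (A 0).totalDegree + 1 ≤ k := by
      rcases hA 0 with h | h
      · omega
      · rw [h, totalDegree_zero]; omega
    have hB0 : (B 0).totalDegree + 1 ≤ k := by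
      rcases hB 0 with h | h
      · exact h
      · rw [h, totalDegree_zero]; omega
    have hm : w.totalDegree ≤ max ((A 0).totalDegree) ((B 0).totalDegree) :=
      totalDegree_add _ _
    have hwk : w.totalDegree + 1 ≤ k := by
      rcases max_cases ((A 0).totalDegree) ((B 0).totalDegree) with ⟨he, _⟩ | ⟨he, _⟩ <;> omega
    have hdeg : (Wpoly w).totalDegree ≤ k := (Wpoly_deg w).trans (by omega)
    have hLHS : (∫ p in refTet, dot3 ((MvPolynomial.eval ![p.2.1, p.2.2] q, 0, 0))
          (ev3 (A 0 + B 0) p, ev3 (A 1 + B 1) p, ev3 (A 2 + B 2) p)) =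
        ∫ p in refTet, (fun pr : ℝ × ℝ => MvPolynomial.eval ![pr.1, pr.2] q) p.2 * ev3 w p :=
      integral_congr_ae (Filter.Eventually.of_forall fun p => by simp [dot3, hw])
    have hRHS : (∫ p in refTet, dot3 ((f (p.2.1, p.2.2), 0, 0))
          (ev3 (A 0 + B 0) p, ev3 (A 1 + B 1) p, ev3 (A 2 + B 2) p)) =
        ∫ p in refTet, (fun pr : ℝ × ℝ => f pr) p.2 * ev3 w p :=
      integral_congr_ae (Filter.Eventually.of_forall fun p => by simp [dot3, hw])
    rw [hLHS, hRHS, tet _ hqInt w, tet _ hf1 w]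
    exact (hmom (Wpoly w) hdeg).symm
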